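/- Let Ω ⊆ ℝ² be open, let F, U : ℝ² → ℝ be continuously differentiable on Ω with U nonvanishing on Ω, and suppose U is an integrating factor for F, i.e. ∂₁U + ∂₂(F·U) = 0 on Ω. Then the derivations D_x and D_h commute: for every twice continuously differentiable g : ℝ² → ℝ and every p ∈ Ω, (D_h(D_x g))(p) = (D_x(D_h g))(p). -/

import Mathlib

noncomputable section

/-- Partial derivative with respect to the first variable. -/
def pd1 (f : ℝ × ℝ → ℝ) (p : ℝ × ℝ) : ℝ := deriv (fun t => f (t, p.2)) p.1

/-- Partial derivative with respect to the second variable. -/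
def pd2 (f : ℝ × ℝ → ℝ) (p : ℝ × ℝ) : ℝ := deriv (fun t => f (p.1, t)) p.2

/-- The operator `D_x g = ∂₁ g + F · ∂₂ g`. -/
def Dx (F : ℝ × ℝ → ℝ) (g : ℝ × ℝ → ℝ) (p : ℝ × ℝ) : ℝ := pd1 g p + F p * pd2 g p

/-- The operator `D_h g = U⁻¹ · ∂₂ g`. -/
def Dh (U : ℝ × ℝ → ℝ) (g : ℝ × ℝ → ℝ) (p : ℝ × ℝ) : ℝ := (U p)⁻¹ * pd2 g p

lemma hasDerivAt_sect1 {f : ℝ × ℝ → ℝ} {p : ℝ × ℝ} (hf : DifferentiableAt ℝ f p) :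
    HasDerivAt (fun t => f (t, p.2)) (fderiv ℝ f p (1, 0)) p.1 :=
  hf.hasFDerivAt.comp_hasDerivAt p.1 ((hasDerivAt_id p.1).prodMk (hasDerivAt_const p.1 p.2))

lemma hasDerivAt_sect2 {f : ℝ × ℝ → ℝ} {p : ℝ × ℝ} (hf : DifferentiableAt ℝ f p) :
    HasDerivAt (fun t => f (p.1, t)) (fderiv ℝ f p (0, 1)) p.2 :=
  hf.hasFDerivAt.comp_hasDerivAt p.2 ((hasDerivAt_const p.2 p.1).prodMk (hasDerivAt_id p.2))

lemma pd1_eq_fderiv {f : ℝ × ℝ → ℝ} {p : ℝ × ℝ} (hf : DifferentiableAt ℝ f p) :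
    pd1 f p = fderiv ℝ f p (1, 0) := (hasDerivAt_sect1 hf).deriv

lemma pd2_eq_fderiv {f : ℝ × ℝ → ℝ} {p : ℝ × ℝ} (hf : DifferentiableAt ℝ f p) :
    pd2 f p = fderiv ℝ f p (0, 1) := (hasDerivAt_sect2 hf).deriv

lemma hasDerivAt_pd1 {f : ℝ × ℝ → ℝ} {p : ℝ × ℝ} (hf : DifferentiableAt ℝ f p) :
    HasDerivAt (fun t => f (t, p.2)) (pd1 f p) p.1 := by
  rw [pd1_eq_fderiv hf]; exact hasDerivAt_sect1 hf

lemma hasDerivAt_pd2 {f : ℝ × ℝ → ℝ} {p : ℝ × ℝ} (hf : DifferentiableAt ℝ f p) :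
    HasDerivAt (fun t => f (p.1, t)) (pd2 f p) p.2 := by
  rw [pd2_eq_fderiv hf]; exact hasDerivAt_sect2 hf

lemma pd1_fun_eq {g : ℝ × ℝ → ℝ} (hg : Differentiable ℝ g) :
    pd1 g = fun q => fderiv ℝ g q (1, 0) := funext fun q => pd1_eq_fderiv (hg q)

lemma pd2_fun_eq {g : ℝ × ℝ → ℝ} (hg : Differentiable ℝ g) :
    pd2 g = fun q => fderiv ℝ g q (0, 1) := funext fun q => pd2_eq_fderiv (hg q)

lemma pd_diff {g : ℝ × ℝ → ℝ} (hg : ContDiff ℝ 2 g) :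
    Differentiable ℝ (pd1 g) ∧ Differentiable ℝ (pd2 g) := by
  have hdg : Differentiable ℝ g := hg.differentiable two_ne_zero
  have hfd : ContDiff ℝ 1 (fderiv ℝ g) := hg.fderiv_right (le_refl 2)
  constructor
  · rw [pd1_fun_eq hdg]
    exact (hfd.clm_apply contDiff_const).differentiable one_ne_zero
  · rw [pd2_fun_eq hdg]
    exact (hfd.clm_apply contDiff_const).differentiable one_ne_zero

/-- Clairaut / Schwarz symmetry for C² functions, in terms of `pd1` and `pd2`. -/
lemma pd1_pd2_comm {g : ℝ × ℝ → ℝ} (hg : ContDiff ℝ 2 g) (p : ℝ × ℝ) :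
    pd1 (pd2 g) p = pd2 (pd1 g) p := by
  have hdg : Differentiable ℝ g := hg.differentiable two_ne_zero
  have hfd : ContDiff ℝ 1 (fderiv ℝ g) := hg.fderiv_right (le_refl 2)
  have H : HasFDerivAt (fderiv ℝ g) (fderiv ℝ (fderiv ℝ g) p) p :=
    ((hfd.differentiable one_ne_zero) p).hasFDerivAt
  have e1 : HasDerivAt (fun t => fderiv ℝ g (t, p.2) (0, 1))
      (fderiv ℝ (fderiv ℝ g) p (1, 0) (0, 1)) p.1 := by
    have := (H.clm_apply (hasFDerivAt_const ((0 : ℝ), (1 : ℝ)) p)).comp_hasDerivAt p.1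
      ((hasDerivAt_id p.1).prodMk (hasDerivAt_const p.1 p.2))
    simpa [Function.comp_def] using this
  have e2 : HasDerivAt (fun t => fderiv ℝ g (p.1, t) (1, 0))
      (fderiv ℝ (fderiv ℝ g) p (0, 1) (1, 0)) p.2 := by
    have := (H.clm_apply (hasFDerivAt_const ((1 : ℝ), (0 : ℝ)) p)).comp_hasDerivAt p.2
      ((hasDerivAt_const p.2 p.1).prodMk (hasDerivAt_id p.2))
    simpa [Function.comp_def] using this
  have hsymm : fderiv ℝ (fderiv ℝ g) p (1, 0) (0, 1)
      = fderiv ℝ (fderiv ℝ g) p (0, 1) (1, 0) :=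
    second_derivative_symmetric (fun y => (hdg y).hasFDerivAt) H _ _
  have l1 : pd1 (pd2 g) p = fderiv ℝ (fderiv ℝ g) p (1, 0) (0, 1) := by
    rw [pd2_fun_eq hdg]; exact e1.deriv
  have l2 : pd2 (pd1 g) p = fderiv ℝ (fderiv ℝ g) p (0, 1) (1, 0) := by
    rw [pd1_fun_eq hdg]; exact e2.deriv
  rw [l1, l2, hsymm]

/-- if `U` is an integrating factor for `F`, i.e. `∂₁U + ∂₂(F·U) = 0` on `Ω`,
then the derivations `D_x` and `D_h` commute on `Ω`. -/
theorem Dx_Dh_commute (Ω : Set (ℝ × ℝ)) (hΩ : IsOpen Ω)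
    (F U : ℝ × ℝ → ℝ)
    (hF : ContDiffOn ℝ 1 F Ω) (hU : ContDiffOn ℝ 1 U Ω)
    (hU0 : ∀ p ∈ Ω, U p ≠ 0)
    (hint : ∀ p ∈ Ω, pd1 U p + pd2 (fun q => F q * U q) p = 0) :
    ∀ g : ℝ × ℝ → ℝ, ContDiff ℝ 2 g →
      ∀ p ∈ Ω, Dh U (Dx F g) p = Dx F (Dh U g) p := by
  intro g hg p hp
  have hFd : DifferentiableAt ℝ F p :=
    (hF.differentiableOn one_ne_zero).differentiableAt (hΩ.mem_nhds hp)
  have hUd : DifferentiableAt ℝ U p :=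
    (hU.differentiableOn one_ne_zero).differentiableAt (hΩ.mem_nhds hp)
  have hUne : U p ≠ 0 := hU0 p hp
  obtain ⟨hg1, hg2⟩ := pd_diff hg
  -- LHS: pd2 of Dx F g
  have L : pd2 (Dx F g) p
      = pd2 (pd1 g) p + (pd2 F p * pd2 g p + F p * pd2 (pd2 g) p) := by
    have : HasDerivAt (fun t => Dx F g (p.1, t))
        (pd2 (pd1 g) p + (pd2 F p * pd2 g p + F p * pd2 (pd2 g) p)) p.2 := by
      unfold Dx
      exact (hasDerivAt_pd2 (hg1 p)).add ((hasDerivAt_pd2 hFd).mul (hasDerivAt_pd2 (hg2 p)))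
    exact this.deriv
  -- RHS pieces: pd1 and pd2 of Dh U g
  have R1 : pd1 (Dh U g) p
      = -pd1 U p / U p ^ 2 * pd2 g p + (U p)⁻¹ * pd1 (pd2 g) p := by
    have : HasDerivAt (fun t => Dh U g (t, p.2))
        (-pd1 U p / U p ^ 2 * pd2 g p + (U p)⁻¹ * pd1 (pd2 g) p) p.1 := by
      unfold Dh
      exact ((hasDerivAt_pd1 hUd).inv hUne).mul (hasDerivAt_pd1 (hg2 p))
    exact this.deriv
  have R2 : pd2 (Dh U g) p
      = -pd2 U p / U p ^ 2 * pd2 g p + (U p)⁻¹ * pd2 (pd2 g) p := by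
    have : HasDerivAt (fun t => Dh U g (p.1, t))
        (-pd2 U p / U p ^ 2 * pd2 g p + (U p)⁻¹ * pd2 (pd2 g) p) p.2 := by
      unfold Dh
      exact ((hasDerivAt_pd2 hUd).inv hUne).mul (hasDerivAt_pd2 (hg2 p))
    exact this.deriv
  -- the integrating factor identity, expanded
  have hFU : pd2 (fun q => F q * U q) p = pd2 F p * U p + F p * pd2 U p :=
    ((hasDerivAt_pd2 hFd).mul (hasDerivAt_pd2 hUd)).deriv
  have hint' : pd1 U p + (pd2 F p * U p + F p * pd2 U p) = 0 := by
    rw [← hFU]; exact hint p hp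
  have hcl := pd1_pd2_comm hg p
  show (U p)⁻¹ * pd2 (Dx F g) p = pd1 (Dh U g) p + F p * pd2 (Dh U g) p
  rw [L, R1, R2, hcl]
  have h2 : pd1 U p = -(pd2 F p * U p + F p * pd2 U p) := by linarith
  rw [h2]
  field_simp
  ring
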